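/- For k > ℓ with δ ≥ (1-m_k)/m_k, the minimum of E_q(f) over Q_k equals μ_k - σ_k·√(m_k·δ - (1-m_k)), and is attained uniquely by q_k defined by q_k(x_i) = (p(x_i)/m_k)·(1 - ((f(x_i)-μ_k)/σ_k)·√(m_k·δ - (1-m_k))) for i ≤ k and q_k(x_i) = 0 for i > k. -/

import Mathlib

open Finset

set_option maxHeartbeats 1000000 in
/-- For `k > ℓ` with `δ ≥ (1-m_k)/m_k`, the minimum of `E_q(f)` over `Q_k` is
`μ_k - σ_k·√(m_k·δ - (1-m_k))`, attained uniquely by the explicit `q_k`. -/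
theorem chi2_Qk_min
    (n : ℕ) (hn : 0 < n) (f p : Fin n → ℝ) (hf : Monotone f)
    (hp0 : ∀ i, 0 < p i) (hp1 : ∑ i, p i = 1)
    (δ : ℝ) (hδ : 0 ≤ δ)
    (ℓ : Fin n) (hℓ : f ℓ = f ⟨0, hn⟩)
    (hℓmax : ∀ i, f i = f ⟨0, hn⟩ → i ≤ ℓ)
    (k : Fin n) (hk : ℓ < k)
    (m μ σ2 : ℝ)
    (hm : m = ∑ i ∈ Finset.Iic k, p i)
    (hμ : μ = (1 / m) * ∑ i ∈ Finset.Iic k, p i * f i)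
    (hσ2 : σ2 = (1 / m) * ∑ i ∈ Finset.Iic k, p i * (f i - μ) ^ 2)
    (hδ' : (1 - m) / m ≤ δ)
    (Qk : Set (Fin n → ℝ))
    (hQk : Qk = {q | ∑ i, q i = 1 ∧
      ∑ i, (q i - p i) ^ 2 / p i ≤ δ ∧ ∀ i, k < i → q i = 0})
    (qk : Fin n → ℝ)
    (hqk : qk = fun i =>
      if i ≤ k then
        (p i / m) * (1 - ((f i - μ) / Real.sqrt σ2) * Real.sqrt (m * δ - (1 - m)))
      else 0) :
    IsLeast ((fun q : Fin n → ℝ => ∑ i, q i * f i) '' Qk)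
        (μ - Real.sqrt σ2 * Real.sqrt (m * δ - (1 - m))) ∧
      qk ∈ Qk ∧
      (∑ i, qk i * f i) = μ - Real.sqrt σ2 * Real.sqrt (m * δ - (1 - m)) ∧
      (∀ q ∈ Qk, (∑ i, q i * f i) = μ - Real.sqrt σ2 * Real.sqrt (m * δ - (1 - m)) →
        q = qk) := by
  set s := Real.sqrt σ2 with hs_def
  set t := Real.sqrt (m * δ - (1 - m)) with ht_def
  -- basic positivity facts
  have hkk : k ∈ Finset.Iic k := Finset.mem_Iic.mpr le_rfl
  have hk0 : (⟨0, hn⟩ : Fin n) ∈ Finset.Iic k := Finset.mem_Iic.mpr (Fin.mk_le_of_le_val (Nat.zero_le _))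
  have hm0 : 0 < m := by
    rw [hm]; exact Finset.sum_pos (fun i _ => hp0 i) ⟨k, hkk⟩
  have hfk : f ⟨0, hn⟩ < f k :=
    lt_of_le_of_ne (hf (Fin.mk_le_of_le_val (Nat.zero_le _)))
      (fun h => absurd (hℓmax k h.symm) (not_le.mpr hk))
  have Sp : ∑ i ∈ Finset.Iic k, p i = m := hm.symm
  have Spf : ∑ i ∈ Finset.Iic k, p i * f i = m * μ := by
    rw [hμ]; field_simp
  have Spfm : ∑ i ∈ Finset.Iic k, p i * (f i - μ) = 0 := by
    have h1 : ∑ i ∈ Finset.Iic k, p i * (f i - μ)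
        = (∑ i ∈ Finset.Iic k, p i * f i) - μ * ∑ i ∈ Finset.Iic k, p i := by
      rw [Finset.mul_sum, ← Finset.sum_sub_distrib]
      exact Finset.sum_congr rfl (fun i _ => by ring)
    rw [h1, Spf, Sp]; ring
  have Spf2 : ∑ i ∈ Finset.Iic k, p i * (f i - μ) ^ 2 = m * σ2 := by
    rw [hσ2]; field_simp
  have hσ2pos : 0 < σ2 := by
    by_contra h
    push_neg at h
    have hS : ∑ i ∈ Finset.Iic k, p i * (f i - μ) ^ 2 ≤ 0 := by
      rw [Spf2]; exact mul_nonpos_of_nonneg_of_nonpos hm0.le h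
    have hSnn : 0 ≤ ∑ i ∈ Finset.Iic k, p i * (f i - μ) ^ 2 :=
      Finset.sum_nonneg fun i _ => mul_nonneg (hp0 i).le (sq_nonneg _)
    have hS0 : ∀ i ∈ Finset.Iic k, p i * (f i - μ) ^ 2 = 0 :=
      (Finset.sum_eq_zero_iff_of_nonneg (fun i _ => mul_nonneg (hp0 i).le (sq_nonneg _))).mp
        (le_antisymm hS hSnn)
    have hzero : ∀ i ∈ Finset.Iic k, f i = μ := by
      intro i hi
      have h := (mul_eq_zero.mp (hS0 i hi)).resolve_left (hp0 i).ne'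
      have := pow_eq_zero_iff (n := 2) (by norm_num) |>.mp h
      linarith
    have h0 := hzero _ hk0
    have hkμ := hzero _ hkk
    rw [h0, hkμ] at hfk; exact lt_irrefl _ hfk
  have hspos : 0 < s := Real.sqrt_pos.mpr hσ2pos
  have hs2 : s ^ 2 = σ2 := Real.sq_sqrt hσ2pos.le
  have htnn : 0 ≤ m * δ - (1 - m) := by
    have := (div_le_iff₀ hm0).mp hδ'
    nlinarith
  have ht2 : t ^ 2 = m * δ - (1 - m) := Real.sq_sqrt htnn
  have htpos : 0 ≤ t := Real.sqrt_nonneg _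
  -- splitting sums
  have hsplit : ∀ g : Fin n → ℝ,
      ∑ i, g i = ∑ i ∈ Finset.Iic k, g i + ∑ i ∈ (Finset.Iic k)ᶜ, g i :=
    fun g => (Finset.sum_add_sum_compl _ _).symm
  have hcompl : ∀ i : Fin n, i ∈ (Finset.Iic k)ᶜ → k < i := by
    intro i hi
    simpa [Finset.mem_compl, Finset.mem_Iic, not_le] using hi
  have hcomplp : ∑ i ∈ (Finset.Iic k)ᶜ, p i = 1 - m := by
    have := hsplit p
    rw [hp1, Sp] at this; linarith
  -- values of qk
  have hqkIic : ∀ i : Fin n, i ∈ Finset.Iic k →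
      qk i = (1 / m) * p i - (t / (m * s)) * (p i * (f i - μ)) := by
    intro i hi
    rw [hqk]
    simp only [if_pos (Finset.mem_Iic.mp hi)]
    field_simp [hspos.ne', hm0.ne']
  have hqkout : ∀ i : Fin n, k < i → qk i = 0 := by
    intro i hi
    rw [hqk]
    simp only [if_neg (not_le.mpr hi)]
  have hqk_sum : ∑ i, qk i = 1 := by
    have hz : ∑ i ∈ (Finset.Iic k)ᶜ, qk i = 0 :=
      Finset.sum_eq_zero (fun i hi => hqkout i (hcompl i hi))
    rw [hsplit qk, hz, add_zero,
      Finset.sum_congr rfl hqkIic, Finset.sum_sub_distrib, ← Finset.mul_sum, ← Finset.mul_sum,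
      Sp, Spfm]
    field_simp
    ring
  have hqk_val : ∑ i, qk i * f i = μ - s * t := by
    have h1 : ∀ i ∈ Finset.Iic k, qk i * f i
        = (1 / m) * (p i * f i)
          - (t / (m * s)) * (p i * (f i - μ) ^ 2 + μ * (p i * (f i - μ))) := by
      intro i hi
      rw [hqkIic i hi]; ring
    have hz : ∑ i ∈ (Finset.Iic k)ᶜ, qk i * f i = 0 :=
      Finset.sum_eq_zero (fun i hi => by rw [hqkout i (hcompl i hi), zero_mul])
    rw [hsplit (fun i => qk i * f i), hz, add_zero,
      Finset.sum_congr rfl h1, Finset.sum_sub_distrib, ← Finset.mul_sum, ← Finset.mul_sum,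
      Finset.sum_add_distrib, ← Finset.mul_sum, Spf, Spf2, Spfm]
    have hs2' : s * s = σ2 := by nlinarith [hs2]
    field_simp
    linear_combination t * m * hs2'
  -- the key identity
  have key : ∀ q : Fin n → ℝ, (∀ i, k < i → q i = 0) → (∑ i, q i = 1) →
      (∑ i, (q i - p i) ^ 2 / p i)
        = δ + (∑ i ∈ Finset.Iic k, (q i - qk i) ^ 2 / p i)
          - (2 * t / (m * s)) * ((∑ i, q i * f i) - (μ - s * t)) := by
    intro q hq0 hq1
    have hSq : ∑ i ∈ Finset.Iic k, q i = 1 := by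
      have := hsplit q
      rw [hq1, Finset.sum_eq_zero (fun i hi => hq0 i (hcompl i hi)), add_zero] at this
      linarith
    have hSqf : ∑ i, q i * f i = ∑ i ∈ Finset.Iic k, q i * f i := by
      have hz : ∑ i ∈ (Finset.Iic k)ᶜ, q i * f i = 0 :=
        Finset.sum_eq_zero (fun i hi => by rw [hq0 i (hcompl i hi), zero_mul])
      rw [hsplit (fun i => q i * f i), hz, add_zero]
    set A := ∑ i ∈ Finset.Iic k, q i * f i with hA
    set B := ∑ i ∈ Finset.Iic k, q i ^ 2 / p i with hB
    -- LHS = B - 1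
    have hL : ∑ i, (q i - p i) ^ 2 / p i = B - 1 := by
      have h2 : ∑ i ∈ Finset.Iic k, (q i - p i) ^ 2 / p i
          = ∑ i ∈ Finset.Iic k, (q i ^ 2 / p i - 2 * q i + p i) :=
        Finset.sum_congr rfl fun i _ => by
          field_simp [(hp0 i).ne']
          ring
      have h3 : ∑ i ∈ (Finset.Iic k)ᶜ, (q i - p i) ^ 2 / p i
          = ∑ i ∈ (Finset.Iic k)ᶜ, p i :=
        Finset.sum_congr rfl fun i hi => by
          rw [hq0 i (hcompl i hi)]
          field_simp [(hp0 i).ne']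
          ring
      rw [hsplit (fun i => (q i - p i) ^ 2 / p i), h2, h3, hcomplp,
        Finset.sum_add_distrib, Finset.sum_sub_distrib, ← Finset.mul_sum, hSq, Sp]
      ring
    -- middle sum
    have hqqk : ∑ i ∈ Finset.Iic k, q i * qk i / p i
        = (1 / m) - (t / (m * s)) * (A - μ) := by
      have h1 : ∀ i ∈ Finset.Iic k, q i * qk i / p i
          = (1 / m) * q i - (t / (m * s)) * (q i * f i - μ * q i) := by
        intro i hi
        rw [hqkIic i hi]
        field_simp [(hp0 i).ne', hspos.ne', hm0.ne']
      rw [Finset.sum_congr rfl h1, Finset.sum_sub_distrib, ← Finset.mul_sum, ← Finset.mul_sum,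
        Finset.sum_sub_distrib, ← Finset.mul_sum, hSq, ← hA]
      ring
    have hqk2 : ∑ i ∈ Finset.Iic k, qk i ^ 2 / p i = 1 + δ := by
      have h1 : ∀ i ∈ Finset.Iic k, qk i ^ 2 / p i
          = (1 / m ^ 2) * p i - (2 * t / (m ^ 2 * s)) * (p i * (f i - μ))
            + (t ^ 2 / (m ^ 2 * s ^ 2)) * (p i * (f i - μ) ^ 2) := by
        intro i hi
        rw [hqkIic i hi]
        field_simp [(hp0 i).ne', hspos.ne', hm0.ne']
        ring
      rw [Finset.sum_congr rfl h1, Finset.sum_add_distrib, Finset.sum_sub_distrib,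
        ← Finset.mul_sum, ← Finset.mul_sum, ← Finset.mul_sum, Sp, Spfm, Spf2, hs2, ht2]
      field_simp
      ring
    have hmid : ∑ i ∈ Finset.Iic k, (q i - qk i) ^ 2 / p i
        = B - 2 * ((1 / m) - (t / (m * s)) * (A - μ)) + (1 + δ) := by
      have h1 : ∀ i ∈ Finset.Iic k, (q i - qk i) ^ 2 / p i
          = q i ^ 2 / p i - 2 * (q i * qk i / p i) + qk i ^ 2 / p i := by
        intro i hi
        field_simp [(hp0 i).ne']
        ring
      rw [Finset.sum_congr rfl h1, Finset.sum_add_distrib, Finset.sum_sub_distrib,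
        ← Finset.mul_sum, hqqk, hqk2, ← hB]
    rw [hL, hmid, hSqf]
    have hms : m * s ≠ 0 := by positivity
    field_simp
    linear_combination (2 * s) * ht2
  -- qk satisfies the chi-square constraint with equality
  have hqk_chi : ∑ i, (qk i - p i) ^ 2 / p i = δ := by
    rw [key qk hqkout hqk_sum, hqk_val]
    simp
  have hqk_mem : qk ∈ Qk := by
    rw [hQk]
    exact ⟨hqk_sum, le_of_eq hqk_chi, hqkout⟩
  -- main lower bound / uniqueness argument
  have main : ∀ q ∈ Qk, (μ - s * t) ≤ (∑ i, q i * f i) ∧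
      ((∑ i, q i * f i) = μ - s * t → q = qk) := by
    intro q hq
    rw [hQk] at hq
    obtain ⟨h1, h2, h3⟩ := hq
    have hid := key q h3 h1
    have hSle : ∑ i ∈ Finset.Iic k, (q i - qk i) ^ 2 / p i
        ≤ (2 * t / (m * s)) * ((∑ i, q i * f i) - (μ - s * t)) := by linarith
    have hSnn : 0 ≤ ∑ i ∈ Finset.Iic k, (q i - qk i) ^ 2 / p i :=
      Finset.sum_nonneg fun i _ => div_nonneg (sq_nonneg _) (hp0 i).le
    have hc : 0 ≤ 2 * t / (m * s) := by positivity
    have claim : (∑ i, q i * f i) - (μ - s * t) ≤ 0 → q = qk := by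
      intro hD
      have hS0 : ∑ i ∈ Finset.Iic k, (q i - qk i) ^ 2 / p i = 0 :=
        le_antisymm (hSle.trans (mul_nonpos_of_nonneg_of_nonpos hc hD)) hSnn
      have heach : ∀ i ∈ Finset.Iic k, (q i - qk i) ^ 2 / p i = 0 :=
        (Finset.sum_eq_zero_iff_of_nonneg
          (fun i _ => div_nonneg (sq_nonneg _) (hp0 i).le)).mp hS0
      funext i
      by_cases hi : i ≤ k
      · have he := heach i (Finset.mem_Iic.mpr hi)
        have hsq : (q i - qk i) ^ 2 = 0 :=
          (div_eq_zero_iff.mp he).resolve_right (hp0 i).ne'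
        have := pow_eq_zero_iff (n := 2) (by norm_num) |>.mp hsq
        linarith
      · rw [h3 i (not_le.mp hi), hqkout i (not_le.mp hi)]
    constructor
    · by_contra hlt
      push_neg at hlt
      have hq_eq : q = qk := claim (by linarith)
      rw [hq_eq, hqk_val] at hlt
      exact lt_irrefl _ hlt
    · intro hval
      exact claim (by linarith)
  refine ⟨⟨⟨qk, hqk_mem, hqk_val⟩, ?_⟩, hqk_mem, hqk_val, ?_⟩
  · rintro x ⟨q, hq, rfl⟩
    exact (main q hq).1
  · intro q hq hval
    exact (main q hq).2 hval
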